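/- arXiv:1705.10492 — 2 statements merged into one kernel-verified Lean document; each statement's English description precedes it below -/
import Mathlib

section
/- There exists a function f : ℝ² → ℂ of class C^∞ with compact support such that for every function λ : ℝ² → ℂ satisfying λ(x)² = f(x) for all x ∈ ℝ², the set S_λ := {x ∈ ℝ² : λ is not continuous at x} has infinite one-dimensional Hausdorff measure, i.e. H¹(S_λ) = ∞. -/
open MeasureTheory Set Filter Topology ENNReal

noncomputable section

abbrev Euc (m : ℕ) : Type := EuclideanSpace ℝ (Fin m)

/-- `f` is of class `C^{k,α}`. -/
def IsCkHolder {m : ℕ} {F : Type*} [NormedAddCommGroup F] [NormedSpace ℝ F]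
    (k : ℕ) (α : ℝ) (f : Euc m → F) : Prop :=
  ContDiff ℝ k f ∧
    ∃ M : ℝ, ∀ x y : Euc m,
      ‖iteratedFDeriv ℝ k f x - iteratedFDeriv ℝ k f y‖ ≤ M * dist x y ^ α

/-- The `C^{k,α}` Hölder norm. -/
noncomputable def holderNorm {m : ℕ} {F : Type*} [NormedAddCommGroup F] [NormedSpace ℝ F]
    (k : ℕ) (α : ℝ) (f : Euc m → F) : ℝ :=
  (⨆ p : Fin (k + 1) × Euc m, ‖iteratedFDeriv ℝ (p.1 : ℕ) f p.2‖) +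
    ⨆ p : Euc m × Euc m,
      ‖iteratedFDeriv ℝ k f p.1 - iteratedFDeriv ℝ k f p.2‖ / dist p.1 p.2 ^ α

/-- Divergence of a vector field. -/
noncomputable def divg {m : ℕ} (ψ : Euc m → Euc m) (x : Euc m) : ℝ :=
  ∑ i : Fin m, (inner ℝ (fderiv ℝ ψ x (EuclideanSpace.single i (1:ℝ)))
      (EuclideanSpace.single i (1:ℝ)) : ℝ)

/-- Admissible test vector fields for the variation. -/
structure TestField {m : ℕ} (U : Set (Euc m)) (ι : Type*) [Fintype ι] : Type _ where
  φ : ι → Euc m → Euc m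
  smooth : ∀ j, ContDiff ℝ (⊤ : ℕ∞) (φ j)
  cpt : ∀ j, HasCompactSupport (φ j)
  suppSub : ∀ j, tsupport (φ j) ⊆ U
  bdd : ∀ x ∈ U, (∑ j : ι, ‖φ j x‖ ^ 2) ≤ 1

/-- The variation of an `ℝ^ι`-valued function on `U`. -/
noncomputable def Var {m : ℕ} {ι : Type*} [Fintype ι]
    (U : Set (Euc m)) (f : Euc m → ι → ℝ) : ℝ≥0∞ :=
  ⨆ T : TestField U ι, ENNReal.ofReal (∑ j : ι, ∫ x in U, f x j * divg (T.φ j) x)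

/-- The variation of a `ℂ`-valued function, identified with an `ℝ²`-valued one. -/
noncomputable def VarC {m : ℕ} (U : Set (Euc m)) (f : Euc m → ℂ) : ℝ≥0∞ :=
  Var U (fun x => ![(f x).re, (f x).im])

/-- A `C^k`-hypersurface. -/
def IsCHypersurface {m : ℕ} (k : ℕ) (S : Set (Euc m)) : Prop :=
  ∀ x ∈ S, ∃ U : Set (Euc m), IsOpen U ∧ x ∈ U ∧
    ∃ g : Euc m → ℝ, ContDiffOn ℝ k g U ∧ (∀ y ∈ U, fderivWithin ℝ g U y ≠ 0) ∧
      S ∩ U = {y ∈ U | g y = 0}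

/-- `lam` is an `r`-th root of `f` on `Ω`. -/
def IsRthRoot {m : ℕ} (r : ℝ) (Ω : Set (Euc m)) (f lam : Euc m → ℂ) : Prop :=
  (∀ x ∈ Ω, f x = 0 → lam x = 0) ∧
  ∃ g : Euc m → ℂ, ∀ x ∈ Ω, f x ≠ 0 →
    Complex.exp (g x) = f x ∧ lam x = Complex.exp (g x / (r : ℂ))

/-- `g` is a weak gradient of `f` on the open set `V`. -/
def IsWeakGradient {m : ℕ} (V : Set (Euc m)) (f : Euc m → ℂ) (g : Euc m → Fin m → ℂ) : Prop :=
  ∀ φ : Euc m → ℝ, ContDiff ℝ (⊤ : ℕ∞) φ → HasCompactSupport φ → tsupport φ ⊆ V →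
    ∀ i : Fin m,
      ∫ x in V, f x * ((fderiv ℝ φ x (EuclideanSpace.single i (1:ℝ)) : ℝ) : ℂ) =
        - ∫ x in V, g x i * ((φ x : ℝ) : ℂ)


def mk2 (a b : ℝ) : Euc 2 := (EuclideanSpace.equiv (Fin 2) ℝ).symm ![a, b]
@[simp] lemma mk2_apply_zero (a b : ℝ) : mk2 a b 0 = a := rfl
@[simp] lemma mk2_apply_one (a b : ℝ) : mk2 a b 1 = b := rfl
lemma abs_coord_le_norm (x : Euc 2) (i : Fin 2) : |x i| ≤ ‖x‖ := by
  rw [EuclideanSpace.norm_eq, ← Real.sqrt_sq_eq_abs]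
  apply Real.sqrt_le_sqrt
  rw [← sq_abs]
  exact Finset.single_le_sum (f := fun j => |x j|^2) (fun j _ => sq_nonneg _) (Finset.mem_univ i)
lemma mk2_norm (a b : ℝ) : ‖mk2 a b‖ = Real.sqrt (a^2 + b^2) := by
  rw [EuclideanSpace.norm_eq]
  congr 1
  simp [Fin.sum_univ_two, sq_abs]

def bmp : ContDiffBump (0 : Euc 2) := ⟨2, 3, by norm_num, by norm_num⟩
def cxc (x : Euc 2) : ℂ := (x 0 : ℂ) + (x 1 : ℂ) * Complex.I
lemma cxc_smooth : ContDiff ℝ (⊤ : ℕ∞) cxc := by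
  have h0 : ContDiff ℝ (⊤ : ℕ∞) (fun x : Euc 2 => (x 0 : ℂ)) :=
    (Complex.ofRealCLM.comp (EuclideanSpace.proj (0 : Fin 2))).contDiff
  have h1 : ContDiff ℝ (⊤ : ℕ∞) (fun x : Euc 2 => (x 1 : ℂ)) :=
    (Complex.ofRealCLM.comp (EuclideanSpace.proj (1 : Fin 2))).contDiff
  exact h0.add (h1.mul contDiff_const)
def gg (x : Euc 2) : ℂ := bmp x • cxc x
lemma gg_smooth : ContDiff ℝ (⊤ : ℕ∞) gg :=
  (bmp.contDiff (n := (⊤:ℕ∞))).smul cxc_smooth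
lemma gg_support : Function.support gg ⊆ Metric.ball (0 : Euc 2) 3 := by
  intro x hx
  have h : bmp x ≠ 0 := by intro h; apply hx; simp [gg, h]
  have := Function.mem_support.2 h
  rwa [bmp.support_eq] at this
lemma gg_compact : HasCompactSupport gg :=
  HasCompactSupport.of_support_subset_isCompact (isCompact_closedBall 0 3)
    (gg_support.trans Metric.ball_subset_closedBall)
lemma gg_eq (x : Euc 2) (hx : ‖x‖ ≤ 2) : gg x = cxc x := by
  rw [gg, bmp.one_of_mem_closedBall, one_smul]
  simpa [Metric.mem_closedBall, dist_zero_right, bmp] using hx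
lemma gg_bounds : ∃ M : ℕ → ℝ, (∀ i, 0 ≤ M i) ∧
    ∀ i (j : ℕ), j ≤ i → ∀ y, ‖iteratedFDeriv ℝ j gg y‖ ≤ M i := by
  have h : ∀ j : ℕ, ∃ c : ℝ, ∀ y, ‖iteratedFDeriv ℝ j gg y‖ ≤ c := by
    intro j
    have hc : Continuous fun y => ‖iteratedFDeriv ℝ j gg y‖ :=
      (gg_smooth.continuous_iteratedFDeriv (by exact_mod_cast le_top)).norm
    have hcs : HasCompactSupport fun y => ‖iteratedFDeriv ℝ j gg y‖ :=
      (gg_compact.iteratedFDeriv j).norm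
    obtain ⟨C, hC⟩ := hc.bounded_above_of_compact_support hcs
    exact ⟨C, fun y => le_trans (le_abs_self _) (by simpa using hC y)⟩
  choose c hc using h
  refine ⟨fun i => ∑ j ∈ Finset.range (i+1), max (c j) 0, fun i => ?_, fun i j hj y => ?_⟩
  · exact Finset.sum_nonneg fun j _ => le_max_right _ _
  · calc ‖iteratedFDeriv ℝ j gg y‖ ≤ max (c j) 0 := le_max_of_le_left (hc j y)
    _ ≤ _ := Finset.single_le_sum (f := fun j => max (c j) 0)
        (fun _ _ => le_max_right _ _) (Finset.mem_range.2 (Nat.lt_succ_of_le hj))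

def Mg : ℕ → ℝ := Classical.choose gg_bounds
lemma Mg_nonneg (i : ℕ) : 0 ≤ Mg i := (Classical.choose_spec gg_bounds).1 i
lemma Mg_bound {i j : ℕ} (h : j ≤ i) (y : Euc 2) : ‖iteratedFDeriv ℝ j gg y‖ ≤ Mg i :=
  (Classical.choose_spec gg_bounds).2 i j h y

def SS (k : ℕ) : ℝ := (100 * 2 ^ k)⁻¹
def QQ (k j : ℕ) : Euc 2 := mk2 ((j + 2⁻¹) * ((2:ℝ) ^ k)⁻¹) (3 * ((2:ℝ) ^ k)⁻¹)
lemma SS_pos (k : ℕ) : 0 < SS k := by unfold SS; positivity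
lemma SS_le_one (k : ℕ) : SS k ≤ 1 := by
  unfold SS
  rw [inv_le_one₀ (by positivity)]
  nlinarith [one_le_pow₀ (by norm_num : (1:ℝ) ≤ 2) (n := k)]

lemma mk2_smul (c a b : ℝ) : c • mk2 a b = mk2 (c * a) (c * b) := by
  unfold mk2; rw [← _root_.map_smul]; congr 1; ext i; fin_cases i <;> simp

lemma mk2_continuous {f g : ℝ → ℝ} (hf : Continuous f) (hg : Continuous g) :
    Continuous (fun t => mk2 (f t) (g t)) := by
  apply (EuclideanSpace.equiv (Fin 2) ℝ).symm.continuous.comp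
  exact (continuous_pi fun i => by fin_cases i <;> simpa)

lemma mk2_sub (a b c d : ℝ) : mk2 a b - mk2 c d = mk2 (a - c) (b - d) := by
  unfold mk2; rw [← _root_.map_sub]; congr 1; ext i; fin_cases i <;> simp
lemma coord_le_dist (x y : Euc 2) (i : Fin 2) : |x i - y i| ≤ dist x y := by
  rw [dist_eq_norm]
  simpa using abs_coord_le_norm (x - y) i

lemma centers_far {k j k' j' : ℕ} (h : (k, j) ≠ (k', j')) :
    3 * SS k + 3 * SS k' < dist (QQ k j) (QQ k' j') := by
  rcases eq_or_ne k k' with rfl | hk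
  · have hj : j ≠ j' := by rintro rfl; exact h rfl
    have h1 : |QQ k j 0 - QQ k j' 0| ≤ dist (QQ k j) (QQ k j') := coord_le_dist _ _ 0
    have e : QQ k j 0 - QQ k j' 0 = ((j:ℝ) - j') * ((2:ℝ)^k)⁻¹ := by
      simp [QQ]; ring
    have hlow : ((2:ℝ)^k)⁻¹ ≤ |QQ k j 0 - QQ k j' 0| := by
      rw [e, abs_mul, abs_of_nonneg (by positivity : (0:ℝ) ≤ ((2:ℝ)^k)⁻¹)]
      have h2 : (1:ℝ) ≤ |(j:ℝ) - j'| := by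
        have e2 : ((j:ℝ) - j') = ((j:ℤ) - j' : ℤ) := by push_cast; ring
        rw [e2, ← Int.cast_abs]
        have hne : ((j:ℤ) - j') ≠ 0 := sub_ne_zero.2 (by exact_mod_cast hj)
        exact_mod_cast Int.one_le_abs hne
      nlinarith [inv_pos.2 (by positivity : (0:ℝ) < (2:ℝ)^k)]
    have h3 : 3 * SS k + 3 * SS k < ((2:ℝ)^k)⁻¹ := by
      unfold SS
      rw [mul_inv]
      have h2 : (0:ℝ) < ((2:ℝ)^k)⁻¹ := by positivity
      nlinarith
    linarith
  · have h1 : |QQ k j 1 - QQ k' j' 1| ≤ dist (QQ k j) (QQ k' j') := coord_le_dist _ _ 1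
    set u := ((2:ℝ)^k)⁻¹ with hu
    set v := ((2:ℝ)^k')⁻¹ with hv
    have hup : 0 < u := by positivity
    have hvp : 0 < v := by positivity
    have e : QQ k j 1 - QQ k' j' 1 = 3 * (u - v) := by simp [QQ]; ring
    have habs : (3:ℝ)/4 * (u + v) ≤ |QQ k j 1 - QQ k' j' 1| := by
      rw [e, abs_mul, abs_of_nonneg (by norm_num : (0:ℝ) ≤ 3)]
      rcases lt_or_gt_of_ne hk with hlt | hlt
      · have hp : (2:ℝ)^(k+1) ≤ (2:ℝ)^k' := by
          apply pow_le_pow_right₀ (by norm_num) (by omega)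
        have hv2 : v ≤ u / 2 := by
          rw [hu, hv, pow_succ] at *
          rw [div_eq_mul_inv, ← mul_inv]
          exact inv_anti₀ (by positivity) (by linarith)
        rw [abs_of_nonneg (by linarith)]; linarith
      · have hp : (2:ℝ)^(k'+1) ≤ (2:ℝ)^k := by
          apply pow_le_pow_right₀ (by norm_num) (by omega)
        have hu2 : u ≤ v / 2 := by
          rw [hu, hv, pow_succ] at *
          rw [div_eq_mul_inv, ← mul_inv]
          exact inv_anti₀ (by positivity) (by linarith)
        rw [abs_of_nonpos (by linarith)]; linarith
    have hS : 3 * SS k + 3 * SS k' < 3/4 * (u + v) := by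
      unfold SS
      rw [mul_inv, mul_inv, ← hu, ← hv]
      nlinarith
    linarith

/-! ## the coefficients -/

def BB (k : ℕ) : ℝ := (∑ i ∈ Finset.range (k+1), (Nat.factorial i : ℝ) * Mg i * ((SS k)⁻¹)^i) + 1
lemma BB_term_nonneg (k i : ℕ) : 0 ≤ (Nat.factorial i : ℝ) * Mg i * ((SS k)⁻¹)^i := by
  have h1 := Mg_nonneg i
  have h2 := (SS_pos k).le
  have h3 : (0:ℝ) ≤ (Nat.factorial i : ℝ) := Nat.cast_nonneg _
  positivity
lemma one_le_BB (k : ℕ) : 1 ≤ BB k := by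
  have : 0 ≤ ∑ i ∈ Finset.range (k+1), (Nat.factorial i : ℝ) * Mg i * ((SS k)⁻¹)^i :=
    Finset.sum_nonneg fun i _ => BB_term_nonneg k i
  unfold BB; linarith
lemma BB_pos (k : ℕ) : 0 < BB k := lt_of_lt_of_le one_pos (one_le_BB k)
lemma BB_ge {k i : ℕ} (h : i ≤ k) : (Nat.factorial i : ℝ) * Mg i * ((SS k)⁻¹)^i ≤ BB k := by
  have := Finset.single_le_sum (f := fun i => (Nat.factorial i : ℝ) * Mg i * ((SS k)⁻¹)^i)
    (fun i _ => BB_term_nonneg k i) (Finset.mem_range.2 (Nat.lt_succ_of_le h))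
  unfold BB; linarith

def ccf (k : ℕ) : ℝ := ((4:ℝ)⁻¹)^k / BB k
lemma ccf_pos (k : ℕ) : 0 < ccf k := by
  unfold ccf
  exact div_pos (by positivity) (BB_pos k)

/-! ## the family -/

def FF (p : ℕ × ℕ) (x : Euc 2) : ℂ :=
  if p.2 < 2 ^ p.1 then ccf p.1 • gg ((SS p.1)⁻¹ • (x - QQ p.1 p.2)) else 0

lemma FF_smooth (p : ℕ × ℕ) : ContDiff ℝ (⊤ : ℕ∞) (FF p) := by
  unfold FF
  split
  · exact (gg_smooth.comp ((contDiff_id.sub contDiff_const).const_smul _)).const_smul _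
  · exact contDiff_const

def vv (i : ℕ) (p : ℕ × ℕ) : ℝ :=
  if p.2 < 2 ^ p.1 then ccf p.1 * ((Nat.factorial i : ℝ) * Mg i * ((SS p.1)⁻¹)^i) else 0

lemma affine_deriv_bound (s : ℝ) (hs : 0 < s) (q : Euc 2) {l : ℕ} (hl : 1 ≤ l) (x : Euc 2) :
    ‖iteratedFDeriv ℝ l (fun y : Euc 2 => s⁻¹ • (y - q)) x‖ ≤ (s⁻¹)^l := by
  set L : Euc 2 →L[ℝ] Euc 2 := s⁻¹ • ContinuousLinearMap.id ℝ (Euc 2) with hL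
  have hfun : (fun y : Euc 2 => s⁻¹ • (y - q)) = fun y => L y + (-(s⁻¹ • q)) := by
    funext y; simp [hL, smul_sub, sub_eq_add_neg]
  have hfder : fderiv ℝ (fun y : Euc 2 => s⁻¹ • (y - q)) = fun _ => L := by
    funext y
    rw [hfun]
    exact (L.hasFDerivAt.add_const _).fderiv
  obtain ⟨m, rfl⟩ := Nat.exists_eq_add_of_le hl
  rw [add_comm 1 m, ← norm_iteratedFDeriv_fderiv, hfder]
  cases m with
  | zero =>
    rw [norm_iteratedFDeriv_zero]
    have hle : ‖L‖ ≤ s⁻¹ := by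
      apply ContinuousLinearMap.opNorm_le_bound _ (by positivity)
      intro y
      rw [hL]
      simp only [ContinuousLinearMap.smul_apply, ContinuousLinearMap.id_apply]
      rw [norm_smul, Real.norm_eq_abs, abs_of_nonneg (by positivity : (0:ℝ) ≤ s⁻¹)]
    simpa using hle
  | succ m =>
    rw [iteratedFDeriv_const_of_ne (by omega)]
    simp only [Pi.zero_apply, norm_zero]
    positivity

lemma FF_bound (i : ℕ) (p : ℕ × ℕ) (x : Euc 2) :
    ‖iteratedFDeriv ℝ i (FF p) x‖ ≤ vv i p := by
  obtain ⟨k, j⟩ := p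
  by_cases hv : j < 2 ^ k
  · have hvv : vv i (k, j) = ccf k * ((Nat.factorial i : ℝ) * Mg i * ((SS k)⁻¹)^i) := by
      simp [vv, hv]
    have hFF : FF (k, j) = fun x => ccf k • (gg ∘ fun y : Euc 2 => (SS k)⁻¹ • (y - QQ k j)) x := by
      funext y; simp [FF, hv]
    rw [hvv, hFF]
    have hcomp : ContDiff ℝ (⊤ : ℕ∞) (gg ∘ fun y : Euc 2 => (SS k)⁻¹ • (y - QQ k j)) :=
      gg_smooth.comp ((contDiff_id.sub contDiff_const).const_smul _)
    rw [iteratedFDeriv_const_smul_apply' ((hcomp.of_le (by exact_mod_cast le_top)).contDiffAt)]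
    rw [norm_smul, Real.norm_eq_abs, abs_of_nonneg (ccf_pos k).le]
    apply mul_le_mul_of_nonneg_left _ (ccf_pos k).le
    exact norm_iteratedFDeriv_comp_le (N := ((⊤:ℕ∞) : WithTop ℕ∞)) gg_smooth
      ((contDiff_id.sub contDiff_const).const_smul _) (by exact_mod_cast le_top) x
      (fun l hl => Mg_bound hl _)
      (fun l hl1 hli => affine_deriv_bound (SS k) (SS_pos k) (QQ k j) hl1 x)
  · have h0 : FF (k, j) = fun _ => (0:ℂ) := by funext y; simp [FF, hv]
    have hvv : vv i (k, j) = 0 := by simp [vv, hv]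
    rw [h0, hvv, iteratedFDeriv_zero_fun]
    simp

lemma vv_nonneg (i : ℕ) (p : ℕ × ℕ) : 0 ≤ vv i p := by
  unfold vv
  split
  · have h1 := Mg_nonneg i
    have h2 := (ccf_pos p.1).le
    have h3 := (SS_pos p.1).le
    have h4 : (0:ℝ) ≤ (Nat.factorial i : ℝ) := Nat.cast_nonneg _
    positivity
  · exact le_refl _

lemma vv_summable (i : ℕ) : Summable (vv i) := by
  rw [summable_prod_of_nonneg (fun p => vv_nonneg i p)]
  have hrow : ∀ k, Summable fun j => vv i (k, j) := by
    intro k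
    apply summable_of_ne_finset_zero (s := Finset.range (2^k))
    intro j hj
    have : ¬ j < 2^k := by simpa using hj
    simp [vv, this]
  refine ⟨hrow, ?_⟩
  have hval : ∀ k, (∑' j : ℕ, vv i (k, j))
      = (2^k : ℝ) * (ccf k * ((Nat.factorial i : ℝ) * Mg i * ((SS k)⁻¹)^i)) := by
    intro k
    rw [tsum_eq_sum (s := Finset.range (2^k))
      (fun j hj => by simp [vv, (by simpa using hj : ¬ j < 2^k)])]
    have hc : ∀ j ∈ Finset.range (2^k),
        vv i (k, j) = ccf k * ((Nat.factorial i : ℝ) * Mg i * ((SS k)⁻¹)^i) := by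
      intro j hj
      simp [vv, Finset.mem_range.1 hj]
    rw [Finset.sum_congr rfl hc, Finset.sum_const, Finset.card_range, nsmul_eq_mul]
    norm_num
  simp only [hval]
  set T := (Nat.factorial i : ℝ) * Mg i with hT
  have hTn : 0 ≤ T := by
    have h1 := Mg_nonneg i
    have h4 : (0:ℝ) ≤ (Nat.factorial i : ℝ) := Nat.cast_nonneg _
    positivity
  have hnn : ∀ k, 0 ≤ (2^k : ℝ) * (ccf k * (T * ((SS k)⁻¹)^i)) := by
    intro k
    have h2 := (ccf_pos k).le
    have h3 := (SS_pos k).le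
    positivity
  have hle : ∀ k, i ≤ k → (2^k : ℝ) * (ccf k * (T * ((SS k)⁻¹)^i)) ≤ (2⁻¹ : ℝ)^k := by
    intro k hk
    have hB := BB_ge (k := k) (i := i) hk
    have h2 : ccf k * (T * ((SS k)⁻¹)^i) ≤ ((4:ℝ)⁻¹)^k := by
      rw [ccf, div_mul_eq_mul_div, div_le_iff₀ (BB_pos k)]
      calc ((4:ℝ)⁻¹)^k * (T * ((SS k)⁻¹)^i) = (T * ((SS k)⁻¹)^i) * ((4:ℝ)⁻¹)^k := by ring
      _ ≤ BB k * ((4:ℝ)⁻¹)^k := by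
          apply mul_le_mul_of_nonneg_right _ (by positivity)
          rw [hT]; rw [mul_assoc] at hB ⊢; exact hB
      _ = ((4:ℝ)⁻¹)^k * BB k := by ring
    calc (2^k : ℝ) * (ccf k * (T * ((SS k)⁻¹)^i)) ≤ (2^k : ℝ) * ((4:ℝ)⁻¹)^k := by
          apply mul_le_mul_of_nonneg_left h2 (by positivity)
    _ = (2⁻¹ : ℝ)^k := by
        rw [← mul_pow]; norm_num
  rw [← summable_nat_add_iff i]
  apply Summable.of_nonneg_of_le (fun n => hnn (n + i)) (fun n => hle (n + i) (by omega))
  rw [summable_nat_add_iff i]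
  exact summable_geometric_of_lt_one (by norm_num) (by norm_num)

def ff (x : Euc 2) : ℂ := ∑' p : ℕ × ℕ, FF p x

lemma ff_smooth : ContDiff ℝ (⊤ : ℕ∞) ff :=
  contDiff_tsum (fun p => FF_smooth p) (fun k _ => vv_summable k)
    (fun k p x _ => FF_bound k p x)

lemma FF_zero_of_far {k j : ℕ} (x : Euc 2) (h : 3 * SS k ≤ dist x (QQ k j)) :
    FF (k, j) x = 0 := by
  unfold FF
  split
  · suffices hz : gg ((SS k)⁻¹ • (x - QQ k j)) = 0 by simp [hz]
    by_contra hg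
    have hp := SS_pos k
    have hmem := gg_support (Function.mem_support.2 hg)
    rw [Metric.mem_ball, dist_zero_right, norm_smul, Real.norm_eq_abs,
      abs_of_nonneg (inv_pos.2 hp).le, ← dist_eq_norm] at hmem
    have hmul : (SS k)⁻¹ * (3 * SS k) ≤ (SS k)⁻¹ * dist x (QQ k j) :=
      mul_le_mul_of_nonneg_left h (inv_pos.2 hp).le
    have heq : (SS k)⁻¹ * (3 * SS k) = 3 := by field_simp
    linarith
  · rfl

lemma ff_eq_local {k j : ℕ} (hj : j < 2 ^ k) {x : Euc 2} (hx : dist x (QQ k j) ≤ 2 * SS k) :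
    ff x = ccf k • gg ((SS k)⁻¹ • (x - QQ k j)) := by
  rw [ff, tsum_eq_single (k, j)]
  · simp [FF, hj]
  · rintro ⟨k', j'⟩ hp
    apply FF_zero_of_far
    have hfar := centers_far (show ((k':ℕ), (j':ℕ)) ≠ (k, j) from hp)
    have htri : dist (QQ k' j') (QQ k j) ≤ dist x (QQ k' j') + dist x (QQ k j) := by
      rw [dist_comm x (QQ k' j')]
      exact dist_triangle _ _ _
    have h1 := SS_pos k
    linarith

lemma ff_support : Function.support ff ⊆ Metric.closedBall (0 : Euc 2) 10 := by
  intro x hx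
  rw [Metric.mem_closedBall, dist_zero_right]
  by_contra hnorm
  push_neg at hnorm
  apply hx
  have hz : ∀ p : ℕ × ℕ, FF p x = 0 := by
    rintro ⟨k, j⟩
    by_cases hv : j < 2 ^ k
    · apply FF_zero_of_far
      have hQ : ‖QQ k j‖ ≤ 5 := by
        rw [QQ, mk2_norm]
        have h2k : (1:ℝ) ≤ (2:ℝ)^k := one_le_pow₀ (by norm_num)
        have ha : ((j:ℝ) + 2⁻¹) * ((2:ℝ)^k)⁻¹ ≤ 2 := by
          rw [mul_inv_le_iff₀ (by positivity)]
          have : (j:ℝ) + 1 ≤ (2:ℝ)^k := by exact_mod_cast Nat.succ_le_of_lt hv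
          nlinarith
        have ha0 : (0:ℝ) ≤ ((j:ℝ) + 2⁻¹) * ((2:ℝ)^k)⁻¹ := by positivity
        have hb : (3:ℝ) * ((2:ℝ)^k)⁻¹ ≤ 3 := by
          rw [mul_inv_le_iff₀ (by positivity)]; nlinarith
        have hb0 : (0:ℝ) ≤ (3:ℝ) * ((2:ℝ)^k)⁻¹ := by positivity
        calc Real.sqrt ((((j:ℝ) + 2⁻¹) * ((2:ℝ)^k)⁻¹)^2 + ((3:ℝ) * ((2:ℝ)^k)⁻¹)^2)
            ≤ Real.sqrt 25 := by
              apply Real.sqrt_le_sqrt; nlinarith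
          _ = 5 := by
              rw [show (25:ℝ) = 5^2 by norm_num, Real.sqrt_sq (by norm_num)]
      have hSS := SS_le_one k
      have hSSp := SS_pos k
      have htri2 : ‖x‖ ≤ dist x (QQ k j) + 5 := by
        calc ‖x‖ = dist x 0 := (dist_zero_right x).symm
          _ ≤ dist x (QQ k j) + dist (QQ k j) 0 := dist_triangle _ _ _
          _ ≤ dist x (QQ k j) + 5 := by rw [dist_zero_right]; linarith
      linarith
    · simp [FF, hv]
  simp [ff, hz]

lemma ff_compact : HasCompactSupport ff :=
  HasCompactSupport.of_support_subset_isCompact (isCompact_closedBall 0 10) ff_support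
lemma sqrt_loop_obstruction {lam : Euc 2 → ℂ} {a : ℝ} (ha : 0 < a) (P : ℝ → Euc 2)
    (hP : Continuous P) (hper : P (2 * Real.pi) = P 0)
    (hval : ∀ θ : ℝ, lam (P θ) ^ 2 = (a : ℂ) * Complex.exp (θ * Complex.I))
    (hcont : ∀ θ : ℝ, ContinuousAt lam (P θ)) : False := by
  set h : ℝ → ℂ := fun θ => lam (P θ) with hh_def
  have hh : Continuous h :=
    continuous_iff_continuousAt.2 fun θ => (hcont θ).comp hP.continuousAt
  set u : ℝ → ℂ := fun θ => h θ * Complex.exp (-(θ/2) * Complex.I) with hu_def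
  have hu : Continuous u := by
    apply hh.mul
    apply Complex.continuous_exp.comp
    continuity
  have husq : ∀ θ, u θ ^ 2 = (a : ℂ) := by
    intro θ
    have hv := hval θ
    have e1 : u θ ^ 2 = h θ ^ 2 * (Complex.exp (-((θ:ℂ)/2) * Complex.I)
        * Complex.exp (-((θ:ℂ)/2) * Complex.I)) := by
      rw [hu_def]; ring
    rw [e1, ← Complex.exp_add, hh_def]
    simp only
    rw [hv, mul_assoc, ← Complex.exp_add]
    rw [show (θ:ℂ) * Complex.I + (-((θ:ℂ)/2) * Complex.I + -((θ:ℂ)/2) * Complex.I) = 0 by ring]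
    rw [Complex.exp_zero, mul_one]
  have hreal : ∀ θ, (u θ).im = 0 ∧ (u θ).re ^ 2 = a := by
    intro θ
    have h2 := husq θ
    have hre : (u θ).re ^ 2 - (u θ).im ^ 2 = a := by
      have := congrArg Complex.re h2
      simpa [pow_two, Complex.mul_re] using this
    have him : (u θ).re * (u θ).im = 0 := by
      have := congrArg Complex.im h2
      simp [pow_two, Complex.mul_im] at this
      linarith
    rcases mul_eq_zero.1 him with h0 | h0
    · exfalso; rw [h0] at hre; nlinarith [sq_nonneg (u θ).im]
    · exact ⟨h0, by rw [h0] at hre; linarith⟩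
  set v : ℝ → ℝ := fun θ => (u θ).re with hv_def
  have hv : Continuous v := Complex.continuous_re.comp hu
  have hvsq : ∀ θ, v θ ^ 2 = a := fun θ => (hreal θ).2
  have hvne : ∀ θ, v θ ≠ 0 := by
    intro θ h0
    have := hvsq θ
    rw [h0] at this
    nlinarith
  have hu2pi : u (2 * Real.pi) = - u 0 := by
    have key : Complex.exp (-((↑(2 * Real.pi) : ℂ) / 2) * Complex.I)
        = - Complex.exp (-((↑(0:ℝ) : ℂ) / 2) * Complex.I) := by
      push_cast
      rw [show -((2 * (Real.pi:ℂ)) / 2) * Complex.I = -((Real.pi:ℂ) * Complex.I) by ring]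
      rw [show -((0:ℂ) / 2) * Complex.I = 0 by ring]
      rw [Complex.exp_neg, Complex.exp_pi_mul_I, Complex.exp_zero]
      norm_num
    rw [hu_def]
    simp only [hh_def]
    rw [hper, key]
    ring
  have hvpi : v (2 * Real.pi) = - v 0 := by
    rw [hv_def]; simp only [hu2pi, Complex.neg_re]
  have hpi : (0:ℝ) ≤ 2 * Real.pi := by positivity
  rcases lt_or_gt_of_ne (hvne 0) with hneg | hpos
  · have : (0:ℝ) ∈ Icc (v 0) (v (2 * Real.pi)) := by
      constructor
      · linarith
      · rw [hvpi]; linarith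
    obtain ⟨θ, _, hθ⟩ := intermediate_value_Icc hpi hv.continuousOn this
    exact hvne θ hθ
  · have : (0:ℝ) ∈ Icc (v (2 * Real.pi)) (v 0) := by
      constructor
      · rw [hvpi]; linarith
      · linarith
    obtain ⟨θ, _, hθ⟩ := intermediate_value_Icc' hpi hv.continuousOn this
    exact hvne θ hθ
lemma circle_bad {lam : Euc 2 → ℂ} (hlam : ∀ x, lam x ^ 2 = ff x) {k j : ℕ} (hj : j < 2 ^ k)
    {r : ℝ} (hr : r ∈ Icc (SS k) (2 * SS k)) :
    ∃ x : Euc 2, dist x (QQ k j) = r ∧ ¬ ContinuousAt lam x := by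
  have hSp := SS_pos k
  have hr0 : 0 < r := lt_of_lt_of_le hSp hr.1
  set P : ℝ → Euc 2 := fun θ => QQ k j + mk2 (r * Real.cos θ) (r * Real.sin θ) with hP_def
  have hdist : ∀ θ, dist (P θ) (QQ k j) = r := by
    intro θ
    rw [hP_def]
    simp only
    rw [dist_eq_norm, add_sub_cancel_left, mk2_norm]
    have htrig : (r * Real.cos θ)^2 + (r * Real.sin θ)^2 = r^2 := by
      have := Real.sin_sq_add_cos_sq θ
      nlinarith
    rw [htrig, Real.sqrt_sq hr0.le]
  by_contra hbad
  push_neg at hbad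
  have hcont : ∀ θ : ℝ, ContinuousAt lam (P θ) := fun θ => hbad (P θ) (hdist θ)
  have hPcont : Continuous P := by
    rw [hP_def]
    exact continuous_const.add (mk2_continuous (by continuity) (by continuity))
  have hper : P (2 * Real.pi) = P 0 := by
    rw [hP_def]
    simp [Real.cos_two_pi, Real.sin_two_pi]
  set a : ℝ := ccf k * ((SS k)⁻¹ * r) with ha_def
  have hSi : (0:ℝ) < (SS k)⁻¹ := inv_pos.2 hSp
  have ha : 0 < a := by
    rw [ha_def]
    exact mul_pos (ccf_pos k) (mul_pos hSi hr0)
  have hval : ∀ θ : ℝ, lam (P θ) ^ 2 = (a : ℂ) * Complex.exp (θ * Complex.I) := by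
    intro θ
    rw [hlam (P θ)]
    have hdle : dist (P θ) (QQ k j) ≤ 2 * SS k := by rw [hdist θ]; exact hr.2
    rw [ff_eq_local hj hdle]
    have hy : (SS k)⁻¹ • (P θ - QQ k j)
        = mk2 ((SS k)⁻¹ * r * Real.cos θ) ((SS k)⁻¹ * r * Real.sin θ) := by
      rw [hP_def]
      simp only
      rw [add_sub_cancel_left, mk2_smul]
      congr 1 <;> ring
    rw [hy]
    have hnorm : ‖mk2 ((SS k)⁻¹ * r * Real.cos θ) ((SS k)⁻¹ * r * Real.sin θ)‖ ≤ 2 := by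
      rw [mk2_norm]
      have htrig : ((SS k)⁻¹ * r * Real.cos θ)^2 + ((SS k)⁻¹ * r * Real.sin θ)^2
          = ((SS k)⁻¹ * r)^2 := by
        have := Real.sin_sq_add_cos_sq θ
        nlinarith
      rw [htrig, Real.sqrt_sq (by positivity)]
      rw [inv_mul_le_iff₀ hSp]
      linarith [hr.2]
    rw [gg_eq _ hnorm]
    rw [cxc]
    simp only [mk2_apply_zero, mk2_apply_one]
    rw [Complex.exp_mul_I]
    rw [ha_def]
    push_cast [Complex.ofReal_cos, Complex.ofReal_sin]
    rw [Complex.real_smul]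
    push_cast
    ring
  exact sqrt_loop_obstruction ha P hPcont hper hval hcont

/-- A smooth compactly supported `f : ℝ² → ℂ` all of whose square roots
have a discontinuity set of infinite `H¹`-measure. -/
theorem exists_smooth_with_bad_sqrt :
    ∃ f : Euc 2 → ℂ, ContDiff ℝ (⊤ : ℕ∞) f ∧ HasCompactSupport f ∧
      ∀ lam : Euc 2 → ℂ, (∀ x, lam x ^ 2 = f x) →
        (μH[(1 : ℝ)] : Measure (Euc 2)) {x : Euc 2 | ¬ ContinuousAt lam x} = ⊤ := by
  refine ⟨ff, ff_smooth, ff_compact, ?_⟩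
  intro lam hlam
  set μ : Measure (Euc 2) := (μH[(1:ℝ)] : Measure (Euc 2)) with hμ
  set D : Set (Euc 2) := {x : Euc 2 | ¬ ContinuousAt lam x} with hD
  set A : ℕ × ℕ → Set (Euc 2) := fun p =>
    if p.2 < 2 ^ p.1 then
      Metric.closedBall (QQ p.1 p.2) (2 * SS p.1) \ Metric.ball (QQ p.1 p.2) (SS p.1)
    else ∅ with hA
  have hAmeas : ∀ p, MeasurableSet (A p) := by
    intro p
    rw [hA]
    dsimp only
    split
    · exact measurableSet_closedBall.diff measurableSet_ball
    · exact MeasurableSet.empty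
  have hAsub : ∀ p : ℕ × ℕ, A p ⊆ Metric.closedBall (QQ p.1 p.2) (2 * SS p.1) := by
    intro p
    rw [hA]
    dsimp only
    split
    · exact diff_subset
    · exact empty_subset _
  have hAdisj : Pairwise (Function.onFun Disjoint A) := by
    intro p p' hne
    rw [Function.onFun]
    rw [Set.disjoint_left]
    intro x hx hx'
    have h1 := hAsub p hx
    have h2 := hAsub p' hx'
    rw [Metric.mem_closedBall] at h1 h2
    have hfar := centers_far (show (p.1, p.2) ≠ (p'.1, p'.2) by
      simpa using hne)
    have htri : dist (QQ p.1 p.2) (QQ p'.1 p'.2) ≤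
        dist x (QQ p.1 p.2) + dist x (QQ p'.1 p'.2) := by
      rw [dist_comm x (QQ p.1 p.2)] at *
      exact dist_triangle _ _ _
    have := SS_pos p.1
    have := SS_pos p'.1
    linarith
  have hlow : ∀ k j, j < 2 ^ k → ENNReal.ofReal (SS k) ≤ μ (A (k, j) ∩ D) := by
    intro k j hj
    have hSp := SS_pos k
    have hsub : Icc (SS k) (2 * SS k) ⊆ (fun x => dist x (QQ k j)) '' (A (k, j) ∩ D) := by
      intro r hrr
      obtain ⟨x, hx1, hx2⟩ := circle_bad hlam hj hrr
      refine ⟨x, ⟨?_, hx2⟩, hx1⟩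
      rw [hA]
      simp only [hj, if_true]
      constructor
      · rw [Metric.mem_closedBall, hx1]; exact hrr.2
      · rw [Metric.mem_ball, hx1]; exact not_lt.2 hrr.1
    calc ENNReal.ofReal (SS k) = (μH[(1:ℝ)] : Measure ℝ) (Icc (SS k) (2 * SS k)) := by
          rw [hausdorffMeasure_real, Real.volume_Icc]
          congr 1
          ring
      _ ≤ (μH[(1:ℝ)] : Measure ℝ) ((fun x => dist x (QQ k j)) '' (A (k, j) ∩ D)) :=
          measure_mono hsub
      _ ≤ μ (A (k, j) ∩ D) := by
          have hL := (LipschitzWith.dist_left (QQ k j)).hausdorffMeasure_image_le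
            (d := (1:ℝ)) (by norm_num) (A (k, j) ∩ D)
          simpa using hL
  have htop : (⊤ : ℝ≥0∞) ≤ μ D := by
    have e1 : μ D = μ.restrict D univ := by
      rw [Measure.restrict_apply MeasurableSet.univ, univ_inter]
    rw [e1]
    refine le_trans ?_ (measure_mono (subset_univ (⋃ p, A p)))
    rw [measure_iUnion hAdisj hAmeas]
    have e2 : ∀ p, μ.restrict D (A p) = μ (A p ∩ D) := fun p => Measure.restrict_apply (hAmeas p)
    have hge : ∀ p : ℕ × ℕ, (if p.2 < 2 ^ p.1 then ENNReal.ofReal (SS p.1) else 0)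
        ≤ μ.restrict D (A p) := by
      rintro ⟨k, j⟩
      by_cases hv : j < 2 ^ k
      · simpa [hv, e2 (k, j)] using hlow k j hv
      · simp [hv]
    refine le_trans (le_of_eq ?_) (ENNReal.tsum_le_tsum hge)
    rw [ENNReal.tsum_prod']
    have hrow : ∀ k : ℕ, (∑' j : ℕ, (if j < 2 ^ k then ENNReal.ofReal (SS k) else 0))
        = ENNReal.ofReal (100⁻¹ : ℝ) := by
      intro k
      rw [tsum_eq_sum (s := Finset.range (2 ^ k))
        (fun j hj => if_neg (by simpa using hj))]
      rw [Finset.sum_congr rfl (fun j hj => if_pos (Finset.mem_range.1 hj))]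
      rw [Finset.sum_const, Finset.card_range, nsmul_eq_mul]
      rw [show ((2 ^ k : ℕ) : ℝ≥0∞) = ENNReal.ofReal ((2 ^ k : ℕ) : ℝ) by
        rw [ENNReal.ofReal_natCast]]
      rw [← ENNReal.ofReal_mul (by positivity)]
      congr 1
      rw [SS]
      push_cast
      field_simp
    rw [tsum_congr hrow]
    exact (ENNReal.tsum_const_eq_top_of_ne_zero
      (ne_of_gt (ENNReal.ofReal_pos.2 (by norm_num)))).symm
  exact top_le_iff.1 htop


end
end

section
/- Let a < b be real numbers, set Ω := (a, b), and let Ω₀ ⊆ Ω be an open subset. Let f : ℝ → ℂ be a function such that for every x ∈ Ω \ Ω₀ one has f(x) = 0 and f is continuous at x. Then the pointwise variations of f over Ω and over Ω₀ coincide: eVar(f, Ω) = eVar(f, Ω₀). In particular, f has bounded pointwise variation on Ω if and only if it has bounded pointwise variation on Ω₀. -/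
open MeasureTheory Set Filter Topology ENNReal

noncomputable section

/-- Key increment bound: for `x ≤ y`, if `f` vanishes and is continuous at every point of
`[x,y]` outside the open set `Ω₀`, then `edist (f y) (f x)` is bounded by the variation
of `f` on `Ω₀ ∩ [x,y]`. -/
lemma evar_increment_aux (Ω₀ : Set ℝ) (hΩ₀o : IsOpen Ω₀) (f : ℝ → ℂ) (x y : ℝ) (hxy : x ≤ y)
    (h0 : ∀ z ∈ Set.Icc x y, z ∉ Ω₀ → f z = 0 ∧ ContinuousAt f z) :
    edist (f y) (f x) ≤ eVariationOn f (Ω₀ ∩ Set.Icc x y) := by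
  by_cases hx : x ∈ Ω₀ <;> by_cases hy : y ∈ Ω₀
  · exact eVariationOn.edist_le f ⟨hy, hxy, le_rfl⟩ ⟨hx, le_rfl, hxy⟩
  · -- x ∈ Ω₀, y ∉ Ω₀ : approach the boundary point c = sInf from the left
    set K : Set ℝ := Set.Icc x y ∩ Ω₀ᶜ with hK
    have hKc : IsCompact K := isCompact_Icc.inter_right hΩ₀o.isClosed_compl
    have hKne : K.Nonempty := ⟨y, ⟨hxy, le_rfl⟩, hy⟩
    obtain ⟨⟨⟨hxc, hcy⟩, hcΩ⟩, -⟩ : sInf K ∈ K ∧ True := ⟨hKc.sInf_mem hKne, trivial⟩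
    set c := sInf K with hc
    have hxc' : x < c := lt_of_le_of_ne hxc fun h => hcΩ (h ▸ hx)
    have hsub : Set.Ico x c ⊆ Ω₀ ∩ Set.Icc x y := by
      intro z hz
      have hz1 : z ∈ Set.Icc x y := ⟨hz.1, hz.2.le.trans hcy⟩
      refine ⟨?_, hz1⟩
      by_contra hzΩ
      exact absurd (csInf_le hKc.bddBelow ⟨hz1, hzΩ⟩) (not_le.2 hz.2)
    obtain ⟨hfc, hcont⟩ := h0 c ⟨hxc, hcy⟩ hcΩ
    have hfy : f y = 0 := (h0 y ⟨hxy, le_rfl⟩ hy).1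
    rw [hfy, edist_comm]
    refine ENNReal.le_of_forall_pos_le_add fun ε hε _ => ?_
    obtain ⟨δ, hδ, hδ'⟩ := Metric.continuousAt_iff.1 hcont ε (by exact_mod_cast hε)
    set s := max (c - δ/2) x with hs
    have hs1 : s < c := max_lt (by linarith) hxc'
    have hs2 : x ≤ s := le_max_right _ _
    have hsmem : s ∈ Ω₀ ∩ Set.Icc x y := hsub ⟨hs2, hs1⟩
    have hds : dist s c < δ := by
      rw [Real.dist_eq, abs_of_neg (by linarith)]
      have : c - δ/2 ≤ s := le_max_left _ _
      linarith
    calc edist (f x) 0 ≤ edist (f x) (f s) + edist (f s) 0 := edist_triangle _ _ _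
      _ ≤ eVariationOn f (Ω₀ ∩ Set.Icc x y) + ε := by
          refine add_le_add (eVariationOn.edist_le f ⟨hx, le_rfl, hxy⟩ hsmem) ?_
          rw [← hfc, edist_dist]
          calc ENNReal.ofReal (dist (f s) (f c)) ≤ ENNReal.ofReal ε :=
                ENNReal.ofReal_le_ofReal (hδ' hds).le
            _ = ε := ENNReal.ofReal_coe_nnreal
  · -- x ∉ Ω₀, y ∈ Ω₀ : approach the boundary point c = sSup from the right
    set K : Set ℝ := Set.Icc x y ∩ Ω₀ᶜ with hK
    have hKc : IsCompact K := isCompact_Icc.inter_right hΩ₀o.isClosed_compl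
    have hKne : K.Nonempty := ⟨x, ⟨le_rfl, hxy⟩, hx⟩
    obtain ⟨⟨⟨hxc, hcy⟩, hcΩ⟩, -⟩ : sSup K ∈ K ∧ True := ⟨hKc.sSup_mem hKne, trivial⟩
    set c := sSup K with hc
    have hcy' : c < y := lt_of_le_of_ne hcy fun h => hcΩ (h ▸ hy)
    have hsub : Set.Ioc c y ⊆ Ω₀ ∩ Set.Icc x y := by
      intro z hz
      have hz1 : z ∈ Set.Icc x y := ⟨hxc.trans hz.1.le, hz.2⟩
      refine ⟨?_, hz1⟩
      by_contra hzΩ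
      exact absurd (le_csSup hKc.bddAbove ⟨hz1, hzΩ⟩) (not_le.2 hz.1)
    obtain ⟨hfc, hcont⟩ := h0 c ⟨hxc, hcy⟩ hcΩ
    have hfx : f x = 0 := (h0 x ⟨le_rfl, hxy⟩ hx).1
    rw [hfx]
    refine ENNReal.le_of_forall_pos_le_add fun ε hε _ => ?_
    obtain ⟨δ, hδ, hδ'⟩ := Metric.continuousAt_iff.1 hcont ε (by exact_mod_cast hε)
    set s := min (c + δ/2) y with hs
    have hs1 : c < s := lt_min (by linarith) hcy'
    have hs2 : s ≤ y := min_le_right _ _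
    have hsmem : s ∈ Ω₀ ∩ Set.Icc x y := hsub ⟨hs1, hs2⟩
    have hds : dist s c < δ := by
      rw [Real.dist_eq, abs_of_pos (by linarith)]
      have : s ≤ c + δ/2 := min_le_left _ _
      linarith
    calc edist (f y) 0 ≤ edist (f y) (f s) + edist (f s) 0 := edist_triangle _ _ _
      _ ≤ eVariationOn f (Ω₀ ∩ Set.Icc x y) + ε := by
          refine add_le_add (eVariationOn.edist_le f ⟨hy, hxy, le_rfl⟩ hsmem) ?_
          rw [← hfc, edist_dist]
          calc ENNReal.ofReal (dist (f s) (f c)) ≤ ENNReal.ofReal ε :=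
                ENNReal.ofReal_le_ofReal (hδ' hds).le
            _ = ε := ENNReal.ofReal_coe_nnreal
  · rw [(h0 y ⟨hxy, le_rfl⟩ hy).1, (h0 x ⟨le_rfl, hxy⟩ hx).1, edist_self]
    exact zero_le

/-- Extension by zero does not change the pointwise variation (1-d case). -/
theorem eVariationOn_extension_by_zero (a b : ℝ) (hab : a < b) (Ω₀ : Set ℝ)
    (hΩ₀o : IsOpen Ω₀) (hΩ₀ : Ω₀ ⊆ Set.Ioo a b) (f : ℝ → ℂ)
    (hf : ∀ x ∈ Set.Ioo a b \ Ω₀, f x = 0 ∧ ContinuousAt f x) :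
    eVariationOn f (Set.Ioo a b) = eVariationOn f Ω₀ ∧
      (BoundedVariationOn f (Set.Ioo a b) ↔ BoundedVariationOn f Ω₀) := by
  have key : eVariationOn f (Set.Ioo a b) = eVariationOn f Ω₀ := by
    refine le_antisymm ?_ (eVariationOn.mono f hΩ₀)
    rw [eVariationOn]
    refine iSup_le ?_
    rintro ⟨n, u, hu, us⟩
    have main : ∀ m : ℕ, ∑ i ∈ Finset.range m, edist (f (u (i + 1))) (f (u i)) ≤
        eVariationOn f (Ω₀ ∩ Set.Icc (u 0) (u m)) := by
      intro m
      induction m with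
      | zero => simp
      | succ m ih =>
        rw [Finset.sum_range_succ]
        have hIcc : Set.Icc (u m) (u (m + 1)) ⊆ Set.Ioo a b := fun z hz =>
          ⟨(us m).1.trans_le hz.1, lt_of_le_of_lt hz.2 (us (m + 1)).2⟩
        have h1 : edist (f (u (m + 1))) (f (u m)) ≤
            eVariationOn f (Ω₀ ∩ Set.Icc (u m) (u (m + 1))) :=
          evar_increment_aux Ω₀ hΩ₀o f _ _ (hu (Nat.le_succ m))
            (fun z hz hzΩ => hf z ⟨hIcc hz, hzΩ⟩)
        calc ∑ i ∈ Finset.range m, edist (f (u (i + 1))) (f (u i)) +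
              edist (f (u (m + 1))) (f (u m))
            ≤ eVariationOn f (Ω₀ ∩ Set.Icc (u 0) (u m)) +
              eVariationOn f (Ω₀ ∩ Set.Icc (u m) (u (m + 1))) := add_le_add ih h1
          _ ≤ eVariationOn f ((Ω₀ ∩ Set.Icc (u 0) (u m)) ∪ (Ω₀ ∩ Set.Icc (u m) (u (m + 1)))) :=
              eVariationOn.add_le_union f fun p hp q hq => hp.2.2.trans hq.2.1
          _ ≤ eVariationOn f (Ω₀ ∩ Set.Icc (u 0) (u (m + 1))) := by
              refine eVariationOn.mono f ?_
              rintro z (hz | hz)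
              · exact ⟨hz.1, hz.2.1, hz.2.2.trans (hu (Nat.le_succ m))⟩
              · exact ⟨hz.1, (hu (Nat.zero_le m)).trans hz.2.1, hz.2.2⟩
          _ = eVariationOn f (Ω₀ ∩ Set.Icc (u 0) (u (m + 1))) := rfl
    exact (main n).trans (eVariationOn.mono f Set.inter_subset_left)
  exact ⟨key, by rw [BoundedVariationOn, BoundedVariationOn, key]⟩

end
end
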